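/- Closed form of the fourth moment: let N ≥ 1 and suppose 0 < |ε| < 1/(2N). Then m₄(N) = (2ε)^{N−1} · B · Σ_{k=1}^{N} (−1)^{k+1} · k · ε · C(N,k) · [ −4(2−k)^N + 3(4−k)^N + (−k)^N + 3k·( 2(2−k)^N − (4−k)^N − (−k)^N ) ] / (2 + 4kε), where C denotes the binomial coefficient and B = (1/N!) · Π_{i=0}^{N−1} (1/(2ε) + N − i). -/

import Mathlib

/-- The discrete stochastic process with memory: binomial transfer probabilities
with coupling `ε`. -/
noncomputable def P (ε : ℝ) : ℕ → ℤ → ℝ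
  | 0, x => if x = 0 then 1 else 0
  | n + 1, x =>
      P ε n (x + 1) * (1 / 2 - ((x : ℝ) + 1) * ε) +
      P ε n (x - 1) * (1 / 2 + ((x : ℝ) - 1) * ε)

/-- The `k`-th moment `m_k(n) = Σ_{x ∈ ℤ} x^k · P(n, x)`. -/
noncomputable def m (ε : ℝ) (k n : ℕ) : ℝ := ∑' x : ℤ, (x : ℝ) ^ k * P ε n x

lemma P_eq_zero (ε : ℝ) : ∀ n : ℕ, ∀ x : ℤ, (n : ℤ) < |x| → P ε n x = 0 := by
  intro n
  induction n with
  | zero => intro x hx; simp only [P]; rw [if_neg]; intro h; subst h; simp at hx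
  | succ n ih =>
      intro x hx
      rw [lt_abs] at hx
      have h1 : P ε n (x + 1) = 0 := by apply ih; rw [lt_abs]; omega
      have h2 : P ε n (x - 1) = 0 := by apply ih; rw [lt_abs]; omega
      simp [P, h1, h2]

lemma summable_aux (ε : ℝ) (n : ℕ) (g : ℤ → ℝ) :
    Summable (fun x : ℤ => g x * P ε n x) := by
  apply summable_of_ne_finset_zero (s := Finset.Icc (-(n : ℤ)) n)
  intro x hx
  rw [P_eq_zero ε n x (by simp at hx; rw [lt_abs]; omega)]
  ring

lemma m_rec (ε : ℝ) (k n : ℕ) :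
    m ε k (n + 1) = ∑' y : ℤ,
      (((y : ℝ) - 1) ^ k * (1 / 2 - (y : ℝ) * ε) +
        ((y : ℝ) + 1) ^ k * (1 / 2 + (y : ℝ) * ε)) * P ε n y := by
  have e1 : ∑' x : ℤ, ((x : ℝ)) ^ k * (P ε n (x + 1) * (1 / 2 - ((x : ℝ) + 1) * ε)) =
      ∑' y : ℤ, ((y : ℝ) - 1) ^ k * (1 / 2 - (y : ℝ) * ε) * P ε n y := by
    rw [← (Equiv.addRight (1 : ℤ)).tsum_eq
      (fun y : ℤ => ((y : ℝ) - 1) ^ k * (1 / 2 - (y : ℝ) * ε) * P ε n y)]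
    apply tsum_congr
    intro x
    simp only [Equiv.coe_addRight]
    push_cast
    ring
  have e2 : ∑' x : ℤ, ((x : ℝ)) ^ k * (P ε n (x - 1) * (1 / 2 + ((x : ℝ) - 1) * ε)) =
      ∑' y : ℤ, ((y : ℝ) + 1) ^ k * (1 / 2 + (y : ℝ) * ε) * P ε n y := by
    rw [← (Equiv.addRight (-1 : ℤ)).tsum_eq
      (fun y : ℤ => ((y : ℝ) + 1) ^ k * (1 / 2 + (y : ℝ) * ε) * P ε n y)]
    apply tsum_congr
    intro x
    simp only [Equiv.coe_addRight]
    push_cast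
    ring
  have s1 : Summable (fun x : ℤ => ((x : ℝ)) ^ k * (P ε n (x + 1) * (1 / 2 - ((x : ℝ) + 1) * ε))) := by
    have h := summable_aux ε n (fun y : ℤ => ((y : ℝ) - 1) ^ k * (1 / 2 - (y : ℝ) * ε))
    rw [← (Equiv.addRight (1 : ℤ)).summable_iff] at h
    apply h.congr
    intro x
    simp only [Function.comp_apply, Equiv.coe_addRight]
    push_cast
    ring
  have s2 : Summable (fun x : ℤ => ((x : ℝ)) ^ k * (P ε n (x - 1) * (1 / 2 + ((x : ℝ) - 1) * ε))) := by
    have h := summable_aux ε n (fun y : ℤ => ((y : ℝ) + 1) ^ k * (1 / 2 + (y : ℝ) * ε))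
    rw [← (Equiv.addRight (-1 : ℤ)).summable_iff] at h
    apply h.congr
    intro x
    simp only [Function.comp_apply, Equiv.coe_addRight]
    push_cast
    ring
  calc m ε k (n + 1)
      = ∑' x : ℤ, (((x : ℝ)) ^ k * (P ε n (x + 1) * (1 / 2 - ((x : ℝ) + 1) * ε)) +
        ((x : ℝ)) ^ k * (P ε n (x - 1) * (1 / 2 + ((x : ℝ) - 1) * ε))) := by
        unfold m
        apply tsum_congr; intro x; show (x:ℝ)^k * P ε (n+1) x = _; rw [show P ε (n+1) x = P ε n (x + 1) * (1 / 2 - ((x : ℝ) + 1) * ε) +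
          P ε n (x - 1) * (1 / 2 + ((x : ℝ) - 1) * ε) from rfl]; ring
    _ = _ := by
        rw [Summable.tsum_add s1 s2, e1, e2, ← Summable.tsum_add (summable_aux ε n _) (summable_aux ε n _)]
        apply tsum_congr; intro y; ring

lemma m_zero (ε : ℝ) (k : ℕ) : m ε k 0 = if k = 0 then 1 else 0 := by
  unfold m
  rw [tsum_eq_single 0]
  · simp [P, zero_pow_eq]
  · intro x hx
    have : P ε 0 x = 0 := by simp [P, hx]
    simp [this]

lemma m0_eq (ε : ℝ) (n : ℕ) : m ε 0 n = 1 := by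
  induction n with
  | zero => simpa using m_zero ε 0
  | succ n ih =>
      rw [m_rec]
      have : ∀ y : ℤ, (((y : ℝ) - 1) ^ 0 * (1 / 2 - (y : ℝ) * ε) +
          ((y : ℝ) + 1) ^ 0 * (1 / 2 + (y : ℝ) * ε)) * P ε n y = ((y : ℝ)) ^ 0 * P ε n y := by
        intro y; ring
      rw [tsum_congr this]
      exact ih

lemma m2_rec (ε : ℝ) (n : ℕ) : m ε 2 (n + 1) = (1 + 4 * ε) * m ε 2 n + 1 := by
  rw [m_rec]
  have : ∀ y : ℤ, (((y : ℝ) - 1) ^ 2 * (1 / 2 - (y : ℝ) * ε) +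
      ((y : ℝ) + 1) ^ 2 * (1 / 2 + (y : ℝ) * ε)) * P ε n y =
      (1 + 4 * ε) * ((y : ℝ) ^ 2 * P ε n y) + (y : ℝ) ^ 0 * P ε n y := by
    intro y; ring
  rw [tsum_congr this, Summable.tsum_add ((summable_aux ε n _).mul_left _) (summable_aux ε n _),
    tsum_mul_left]
  rw [show ∑' (y : ℤ), (y:ℝ)^2 * P ε n y = m ε 2 n from rfl,
    show ∑' (y : ℤ), (y:ℝ)^0 * P ε n y = m ε 0 n from rfl, m0_eq]

lemma m4_rec (ε : ℝ) (n : ℕ) :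
    m ε 4 (n + 1) = (1 + 8 * ε) * m ε 4 n + (6 + 8 * ε) * m ε 2 n + 1 := by
  rw [m_rec]
  have : ∀ y : ℤ, (((y : ℝ) - 1) ^ 4 * (1 / 2 - (y : ℝ) * ε) +
      ((y : ℝ) + 1) ^ 4 * (1 / 2 + (y : ℝ) * ε)) * P ε n y =
      (1 + 8 * ε) * ((y : ℝ) ^ 4 * P ε n y) + ((6 + 8 * ε) * ((y : ℝ) ^ 2 * P ε n y) +
        (y : ℝ) ^ 0 * P ε n y) := by
    intro y; ring
  rw [tsum_congr this, Summable.tsum_add ((summable_aux ε n _).mul_left _)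
    (Summable.add ((summable_aux ε n _).mul_left _) (summable_aux ε n _)),
    Summable.tsum_add ((summable_aux ε n _).mul_left _) (summable_aux ε n _),
    tsum_mul_left, tsum_mul_left]
  rw [show ∑' (y : ℤ), (y:ℝ)^4 * P ε n y = m ε 4 n from rfl,
    show ∑' (y : ℤ), (y:ℝ)^2 * P ε n y = m ε 2 n from rfl,
    show ∑' (y : ℤ), (y:ℝ)^0 * P ε n y = m ε 0 n from rfl, m0_eq]
  ring

lemma m2_closed (ε : ℝ) (hε : ε ≠ 0) (n : ℕ) :
    m ε 2 n = ((1 + 4 * ε) ^ n - 1) / (4 * ε) := by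
  induction n with
  | zero => simp [m_zero]
  | succ n ih =>
      rw [m2_rec, ih, pow_succ]
      field_simp
      ring

lemma m4_closed (ε : ℝ) (hε : ε ≠ 0) (n : ℕ) :
    m ε 4 n = ((3 + 6 * ε) * (1 + 8 * ε) ^ n - (6 + 8 * ε) * (1 + 4 * ε) ^ n + (3 + 2 * ε)) /
      (16 * ε ^ 2) := by
  induction n with
  | zero => simp [m_zero]; ring
  | succ n ih =>
      rw [m4_rec, ih, m2_closed ε hε, pow_succ, pow_succ]
      field_simp
      ring

open Polynomial Finset


lemma prodA (k : ℕ) : (∏ j ∈ Icc 1 (k - 1), (k - j)) = (k - 1).factorial := by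
  rw [← Finset.prod_Ico_id_eq_factorial, ← Finset.Ico_add_one_right_eq_Icc]
  apply Finset.prod_nbij' (fun j => k - j) (fun i => k - i)
  · intro a ha; simp at ha ⊢; omega
  · intro a ha; simp at ha ⊢; omega
  · intro a ha; simp at ha; omega
  · intro a ha; simp at ha; omega
  · intro a ha; rfl

lemma prodB (k N : ℕ) : (∏ j ∈ Icc (k + 1) N, (j - k)) = (N - k).factorial := by
  rw [← Finset.prod_Ico_id_eq_factorial, ← Finset.Ico_add_one_right_eq_Icc]
  apply Finset.prod_nbij' (fun j => j - k) (fun i => i + k)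
  · intro a ha; simp at ha ⊢; omega
  · intro a ha; simp at ha ⊢; omega
  · intro a ha; simp at ha; omega
  · intro a ha; simp at ha; omega
  · intro a ha; rfl

lemma prodC (k N : ℕ) (hk1 : 1 ≤ k) (hkN : k ≤ N) :
    (∏ j ∈ Icc 1 N \ {k}, ((k : ℝ) - (j : ℝ))) =
      (-1) ^ (N - k) * ((k - 1).factorial : ℝ) * ((N - k).factorial : ℝ) := by
  have hsplit : Icc 1 N \ {k} = Icc 1 (k - 1) ∪ Icc (k + 1) N := by
    ext j; simp; omega
  have hdisj : Disjoint (Icc 1 (k - 1)) (Icc (k + 1) N) := by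
    rw [Finset.disjoint_left]; intro j hj hj'; simp at hj hj'; omega
  rw [hsplit, Finset.prod_union hdisj]
  have h1 : (∏ j ∈ Icc 1 (k - 1), ((k : ℝ) - (j : ℝ))) = ((k - 1).factorial : ℝ) := by
    rw [← prodA k, Nat.cast_prod]
    apply Finset.prod_congr rfl
    intro j hj; simp at hj
    have : j ≤ k := by omega
    push_cast [this]; ring
  have h2 : (∏ j ∈ Icc (k + 1) N, ((k : ℝ) - (j : ℝ))) =
      (-1) ^ (N - k) * ((N - k).factorial : ℝ) := by
    have : ∀ j ∈ Icc (k + 1) N, (k : ℝ) - (j : ℝ) = -(((j - k : ℕ) : ℝ)) := by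
      intro j hj; simp at hj
      have : k ≤ j := by omega
      push_cast [this]; ring
    have this' : ∀ j ∈ Icc (k + 1) N, (k : ℝ) - (j : ℝ) = (-1) * (((j - k : ℕ) : ℝ)) := by
      intro j hj; rw [this j hj]; ring
    rw [Finset.prod_congr rfl this', Finset.prod_mul_distrib, Finset.prod_const]
    rw [← Nat.cast_prod, prodB, Nat.card_Icc]
    congr 2
    omega
  rw [h1, h2]; ring

noncomputable def Sc (N k : ℕ) : ℝ :=
  -4 * (2 - (k : ℝ)) ^ N + 3 * (4 - (k : ℝ)) ^ N + (-(k : ℝ)) ^ N +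
    3 * (k : ℝ) * (2 * (2 - (k : ℝ)) ^ N - (4 - (k : ℝ)) ^ N - (-(k : ℝ)) ^ N)

noncomputable def cc (N k : ℕ) : ℝ :=
  (-1) ^ (k + 1) * (k : ℝ) * (N.choose k : ℝ) * Sc N k / (4 * (N.factorial : ℝ))

lemma node_scalar (N k : ℕ) (hk1 : 1 ≤ k) (hkN : k ≤ N) :
    (-(1 / (2 * (k : ℝ)))) ^ 2 *
      (16 * cc N k *
        ((-1) ^ (N - k) * ((k - 1).factorial : ℝ) * ((N - k).factorial : ℝ) *
          (1 / (k : ℝ)) ^ (N - 1))) =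
    (3 + 6 * (-(1 / (2 * (k : ℝ))))) * (1 + 8 * (-(1 / (2 * (k : ℝ))))) ^ N -
      (6 + 8 * (-(1 / (2 * (k : ℝ))))) * (1 + 4 * (-(1 / (2 * (k : ℝ))))) ^ N +
      (3 + 2 * (-(1 / (2 * (k : ℝ))))) := by
  set K : ℝ := (k : ℝ) with hK
  have hK0 : K ≠ 0 := by
    simp only [hK, ne_eq, Nat.cast_eq_zero]; omega
  set e : ℝ := (-1) ^ N with he
  have he2 : e * e = 1 := by
    rw [he, ← pow_add]
    exact Even.neg_one_pow ⟨N, rfl⟩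
  have hfact : K * (N.choose k : ℝ) * ((k - 1).factorial : ℝ) * ((N - k).factorial : ℝ) =
      (N.factorial : ℝ) := by
    have h1 : N.choose k * k.factorial * (N - k).factorial = N.factorial :=
      Nat.choose_mul_factorial_mul_factorial hkN
    have h2 : k * (k - 1).factorial = k.factorial := Nat.mul_factorial_pred (by omega)
    rw [hK, ← Nat.cast_mul, ← Nat.cast_mul, ← Nat.cast_mul]
    rw [← h1, ← h2]
    congr 1
    ring
  have hsign : (-1 : ℝ) ^ (k + 1) * (-1) ^ (N - k) = -e := by
    rw [← pow_add, he, show (k + 1) + (N - k) = N + 1 by omega, pow_succ]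
    ring
  have hS : Sc N k = e * (-4 * (K - 2) ^ N + 3 * (K - 4) ^ N + K ^ N +
      3 * K * (2 * (K - 2) ^ N - (K - 4) ^ N - K ^ N)) := by
    rw [Sc, show (2 - K) = -1 * (K - 2) by ring, show (4 - K) = -1 * (K - 4) by ring,
      show -K = -1 * K by ring, mul_pow, mul_pow, mul_pow, ← he, ← hK]
    ring
  have hp : K ^ (N - 1) * K = K ^ N := by
    rw [← pow_succ]; congr 1; omega
  have h8 : (1 + 8 * (-(1 / (2 * K)))) = (K - 4) / K := by field_simp; ring
  have h4 : (1 + 4 * (-(1 / (2 * K)))) = (K - 2) / K := by field_simp; ring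
  rw [h8, h4, cc, hS, ← hK]
  simp only [div_pow, one_pow]
  rw [← hp]
  set a : ℝ := (K - 2) ^ N
  set b : ℝ := (K - 4) ^ N
  set p : ℝ := K ^ (N - 1) with hpdef
  have hp0 : p ≠ 0 := pow_ne_zero _ hK0
  have hF : (N.factorial : ℝ) ≠ 0 := Nat.cast_ne_zero.mpr (Nat.factorial_ne_zero N)
  set T : ℝ := -4 * a + 3 * b + p * K + 3 * K * (2 * a - b - p * K) with hT
  set C1 : ℝ := (N.choose k : ℝ)
  set f1 : ℝ := ((k - 1).factorial : ℝ)
  set f2 : ℝ := ((N - k).factorial : ℝ)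
  have expand : (-(1 / (2 * K))) ^ 2 *
      (16 * ((-1) ^ (k + 1) * K * C1 * (e * T) / (4 * (N.factorial : ℝ))) *
        ((-1) ^ (N - k) * f1 * f2 * (1 / p))) =
      ((-1) ^ (k + 1) * (-1) ^ (N - k)) * (K * C1 * f1 * f2) * (e * T) *
        (16 / (4 * (N.factorial : ℝ)) * (1 / (2 * K)) ^ 2 * (1 / p)) := by
    ring
  rw [expand, hsign, hfact]
  have step : -e * (N.factorial : ℝ) * (e * T) *
      (16 / (4 * (N.factorial : ℝ)) * (1 / (2 * K)) ^ 2 * (1 / p)) =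
      -(N.factorial : ℝ) * T *
      (16 / (4 * (N.factorial : ℝ)) * (1 / (2 * K)) ^ 2 * (1 / p)) := by
    have : -e * (N.factorial : ℝ) * (e * T) = -(e * e) * (N.factorial : ℝ) * T := by ring
    rw [this, he2]
    ring
  rw [step, hT]
  field_simp
  ring

noncomputable def L2 (N : ℕ) : ℝ[X] :=
  ∑ k ∈ Icc 1 N, C (16 * cc N k) * ∏ j ∈ Icc 1 N \ {k}, (1 + C (2 * (j : ℝ)) * X)

noncomputable def Rp (N : ℕ) : ℝ[X] :=
  (C 3 + C 6 * X) * (1 + C 8 * X) ^ N - (C 6 + C 8 * X) * (1 + C 4 * X) ^ N + (C 3 + C 2 * X)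

lemma card_aux (N k : ℕ) (hk1 : 1 ≤ k) (hkN : k ≤ N) : (Icc 1 N \ {k}).card = N - 1 := by
  rw [Finset.card_sdiff_of_subset (by simp; omega)]
  simp

lemma evalL2 (N k : ℕ) (hk1 : 1 ≤ k) (hkN : k ≤ N) :
    eval (-(1 / (2 * (k : ℝ)))) (L2 N) =
      16 * cc N k * ((-1) ^ (N - k) * ((k - 1).factorial : ℝ) * ((N - k).factorial : ℝ) *
        (1 / (k : ℝ)) ^ (N - 1)) := by
  have hK0 : (k : ℝ) ≠ 0 := Nat.cast_ne_zero.mpr (by omega)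
  rw [L2, eval_finset_sum]
  rw [Finset.sum_eq_single_of_mem k (by simp; omega)]
  · rw [eval_mul, eval_C, eval_prod]
    have hfac : ∀ j ∈ Icc 1 N \ {k},
        eval (-(1 / (2 * (k : ℝ)))) (1 + C (2 * (j : ℝ)) * X) =
          ((k : ℝ) - (j : ℝ)) * (1 / (k : ℝ)) := by
      intro j hj
      simp only [eval_add, eval_one, eval_mul, eval_C, eval_X]
      field_simp
      ring
    rw [Finset.prod_congr rfl hfac, Finset.prod_mul_distrib, Finset.prod_const,
      card_aux N k hk1 hkN, prodC k N hk1 hkN]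
  · intro k' hk' hne
    rw [eval_mul, eval_prod]
    have hkmem : k ∈ Icc 1 N \ {k'} := by simp; omega
    rw [Finset.prod_eq_zero hkmem]
    · ring
    · simp only [eval_add, eval_one, eval_mul, eval_C, eval_X]
      field_simp
      norm_num

lemma coeffRp0 (N : ℕ) : coeff (Rp N) 0 = 0 := by
  rw [Polynomial.coeff_zero_eq_eval_zero]
  simp [Rp]
  norm_num

lemma coeffRp1 (N : ℕ) : coeff (Rp N) 1 = 0 := by
  have h : eval 0 (derivative (Rp N)) = coeff (Rp N) 1 := by
    rw [← Polynomial.coeff_zero_eq_eval_zero, Polynomial.coeff_derivative]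
    norm_num
  rw [← h]
  simp only [Rp, derivative_add, derivative_sub, derivative_mul, derivative_pow,
    derivative_one, derivative_C, derivative_X, eval_add, eval_sub, eval_mul, eval_pow,
    eval_one, eval_C, eval_X, eval_natCast, eval_zero]
  ring

lemma degRp (N : ℕ) : natDegree (Rp N) ≤ N + 1 := by
  rw [Rp]
  apply le_trans (natDegree_add_le _ _)
  simp only [max_le_iff]
  constructor
  · apply le_trans (natDegree_sub_le _ _)
    simp only [max_le_iff]
    constructor
    · apply le_trans (natDegree_mul_le)
      have h1 : natDegree (C (3:ℝ) + C 6 * X) ≤ 1 := by compute_degree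
      have h2 : natDegree ((1 + C (8:ℝ) * X) ^ N) ≤ N := by
        apply le_trans (natDegree_pow_le)
        have : natDegree (1 + C (8:ℝ) * X) ≤ 1 := by compute_degree
        calc N * natDegree (1 + C (8:ℝ) * X) ≤ N * 1 := Nat.mul_le_mul_left N this
          _ = N := by ring
      omega
    · apply le_trans (natDegree_mul_le)
      have h1 : natDegree (C (6:ℝ) + C 8 * X) ≤ 1 := by compute_degree
      have h2 : natDegree ((1 + C (4:ℝ) * X) ^ N) ≤ N := by
        apply le_trans (natDegree_pow_le)
        have : natDegree (1 + C (4:ℝ) * X) ≤ 1 := by compute_degree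
        calc N * natDegree (1 + C (4:ℝ) * X) ≤ N * 1 := Nat.mul_le_mul_left N this
          _ = N := by ring
      omega
  · have : natDegree (C (3:ℝ) + C 2 * X) ≤ 1 := by compute_degree
    omega

lemma degL2 (N : ℕ) : natDegree (L2 N) ≤ N - 1 := by
  rw [L2]
  apply natDegree_sum_le_of_forall_le
  intro k hk
  simp only [Finset.mem_Icc] at hk
  apply le_trans (natDegree_mul_le)
  have h1 : natDegree (C (16 * cc N k)) = 0 := natDegree_C _
  have h2 : natDegree (∏ j ∈ Icc 1 N \ {k}, (1 + C (2 * (j : ℝ)) * X)) ≤ N - 1 := by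
    apply le_trans (natDegree_prod_le _ _)
    calc ∑ j ∈ Icc 1 N \ {k}, natDegree (1 + C (2 * (j : ℝ)) * X)
        ≤ ∑ j ∈ Icc 1 N \ {k}, 1 := by
          apply Finset.sum_le_sum
          intro j hj
          compute_degree
      _ = N - 1 := by rw [Finset.sum_const, card_aux N k hk.1 hk.2]; ring
  omega

lemma keyPoly (N : ℕ) (hN : 1 ≤ N) : X ^ 2 * L2 N = Rp N := by
  have hdvd : X ^ 2 ∣ Rp N := by
    rw [Polynomial.X_pow_dvd_iff]
    intro d hd
    interval_cases d
    · exact coeffRp0 N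
    · exact coeffRp1 N
  obtain ⟨R2, hR2⟩ := hdvd
  have hdegR2 : natDegree R2 ≤ N - 1 := by
    by_cases h0 : R2 = 0
    · simp [h0]
    · have hX2 : (X ^ 2 : ℝ[X]) ≠ 0 := pow_ne_zero _ X_ne_zero
      have hd : natDegree (Rp N) = 2 + natDegree R2 := by
        rw [hR2, natDegree_mul hX2 h0, natDegree_X_pow]
      have := degRp N
      omega
  -- the difference polynomial vanishes on N distinct points
  have hroot : ∀ k ∈ Icc 1 N, eval (-(1 / (2 * (k : ℝ)))) (L2 N - R2) = 0 := by
    intro k hk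
    simp only [Finset.mem_Icc] at hk
    have hK0 : (k : ℝ) ≠ 0 := Nat.cast_ne_zero.mpr (by omega)
    have ht0 : (-(1 / (2 * (k : ℝ)))) ≠ 0 := by
      have : (0:ℝ) < 2 * (k : ℝ) := by positivity
      simp only [ne_eq, neg_eq_zero]
      positivity
    have hL : eval (-(1 / (2 * (k : ℝ)))) (X ^ 2 * L2 N) =
        eval (-(1 / (2 * (k : ℝ)))) (Rp N) := by
      rw [eval_mul, eval_pow, eval_X, evalL2 N k hk.1 hk.2, node_scalar N k hk.1 hk.2]
      simp [Rp]
    rw [hR2, eval_mul, eval_mul, eval_pow, eval_X] at hL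
    have := mul_left_cancel₀ (pow_ne_zero 2 ht0) hL
    rw [eval_sub, this, sub_self]
  have hzero : L2 N - R2 = 0 := by
    apply Polynomial.eq_zero_of_natDegree_lt_card_of_eval_eq_zero' _
      ((Icc 1 N).image (fun k : ℕ => -(1 / (2 * (k : ℝ)))))
    · intro t ht
      simp only [Finset.mem_image] at ht
      obtain ⟨k, hk, rfl⟩ := ht
      exact hroot k hk
    · have hinj : Set.InjOn (fun k : ℕ => -(1 / (2 * (k : ℝ)))) (Icc 1 N) := by
        intro a ha b hb h
        simp only [Finset.coe_Icc, Set.mem_Icc] at ha hb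
        simp only [neg_inj] at h
        have ha0 : (a : ℝ) ≠ 0 := Nat.cast_ne_zero.mpr (by omega)
        have hb0 : (b : ℝ) ≠ 0 := Nat.cast_ne_zero.mpr (by omega)
        field_simp at h
        exact_mod_cast h.symm
      rw [Finset.card_image_of_injOn hinj, Nat.card_Icc]
      have hd : natDegree (L2 N - R2) ≤ N - 1 :=
        le_trans (natDegree_sub_le _ _) (by simp [degL2 N, hdegR2])
      omega
  have : L2 N = R2 := by
    have := sub_eq_zero.mp hzero
    exact this
  rw [this, ← hR2]

lemma pref_eq (ε : ℝ) (N : ℕ) (hN : 1 ≤ N) (hε0 : ε ≠ 0) :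
    (2 * ε) ^ (N - 1) *
      ((1 / (N.factorial : ℝ)) * ∏ i ∈ Finset.range N, (1 / (2 * ε) + (N : ℝ) - (i : ℝ))) =
    (1 / (2 * ε * (N.factorial : ℝ))) * ∏ j ∈ Icc 1 N, (1 + 2 * (j : ℝ) * ε) := by
  have h2e : (2 * ε) ≠ 0 := by
    simp only [ne_eq, mul_eq_zero]
    push_neg
    exact ⟨by norm_num, hε0⟩
  have hre : (∏ i ∈ Finset.range N, (1 / (2 * ε) + (N : ℝ) - (i : ℝ))) =
      ∏ j ∈ Icc 1 N, (1 / (2 * ε) + (j : ℝ)) := by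
    apply Finset.prod_nbij' (fun i => N - i) (fun j => N - j)
    · intro a ha; simp at ha ⊢; omega
    · intro a ha; simp at ha ⊢; omega
    · intro a ha; simp at ha; omega
    · intro a ha; simp at ha; omega
    · intro a ha
      simp only [Finset.mem_range] at ha
      have : (((N - a : ℕ)) : ℝ) = (N : ℝ) - (a : ℝ) := by
        push_cast [Nat.cast_sub (le_of_lt ha)]
        ring
      rw [this]
      ring
  have hfac : ∀ j ∈ Icc 1 N, (1 / (2 * ε) + (j : ℝ)) = (1 + 2 * (j : ℝ) * ε) * (1 / (2 * ε)) := by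
    intro j hj
    field_simp
  rw [hre, Finset.prod_congr rfl hfac, Finset.prod_mul_distrib, Finset.prod_const, Nat.card_Icc]
  have hpow : (2 * ε) ^ (N - 1) * (1 / (2 * ε)) ^ (N + 1 - 1) = 1 / (2 * ε) := by
    rw [div_pow, one_pow, Nat.add_sub_cancel]
    rw [show N = (N - 1) + 1 by omega, pow_succ]
    field_simp
    rw [Nat.add_sub_cancel]
  calc (2 * ε) ^ (N - 1) *
      ((1 / (N.factorial : ℝ)) * ((∏ j ∈ Icc 1 N, (1 + 2 * (j : ℝ) * ε)) *
        (1 / (2 * ε)) ^ (N + 1 - 1)))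
      = ((2 * ε) ^ (N - 1) * (1 / (2 * ε)) ^ (N + 1 - 1)) *
        ((1 / (N.factorial : ℝ)) * ∏ j ∈ Icc 1 N, (1 + 2 * (j : ℝ) * ε)) := by ring
    _ = (1 / (2 * ε)) * ((1 / (N.factorial : ℝ)) * ∏ j ∈ Icc 1 N, (1 + 2 * (j : ℝ) * ε)) := by
        rw [hpow]
    _ = _ := by
        rw [one_div, one_div, one_div, mul_inv]
        ring

/-- closed form of the fourth moment. For `N ≥ 1` and `0 < |ε| < 1/(2N)`:
`m₄(N) = (2ε)^{N−1} · B · Σ_{k=1}^{N} (−1)^{k+1} k ε C(N,k)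
  [−4(2−k)^N + 3(4−k)^N + (−k)^N + 3k(2(2−k)^N − (4−k)^N − (−k)^N)]/(2 + 4kε)`
with `B = (1/N!) · Π_{i=0}^{N−1} (1/(2ε) + N − i)`. -/
theorem fourth_moment_closed_form (ε : ℝ) (N : ℕ) (hN : 1 ≤ N)
    (hε : 0 < |ε|) (hε' : |ε| < 1 / (2 * N)) :
    m ε 4 N =
      (2 * ε) ^ (N - 1) *
        ((1 / (N.factorial : ℝ)) * ∏ i ∈ Finset.range N, (1 / (2 * ε) + (N : ℝ) - (i : ℝ))) *
        ∑ k ∈ Finset.Icc 1 N,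
          (-1 : ℝ) ^ (k + 1) * (k : ℝ) * ε * (N.choose k : ℝ) *
            (-4 * (2 - (k : ℝ)) ^ N + 3 * (4 - (k : ℝ)) ^ N + (-(k : ℝ)) ^ N +
              3 * (k : ℝ) *
                (2 * (2 - (k : ℝ)) ^ N - (4 - (k : ℝ)) ^ N - (-(k : ℝ)) ^ N)) /
            (2 + 4 * (k : ℝ) * ε) := by
  classical
  have hε0 : ε ≠ 0 := by
    intro h; rw [h] at hε; simp at hε
  have hF : (N.factorial : ℝ) ≠ 0 := Nat.cast_ne_zero.mpr (Nat.factorial_ne_zero N)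
  have hNR : (1:ℝ) ≤ (N:ℝ) := by exact_mod_cast hN
  have hpos : ∀ k, k ∈ Finset.Icc 1 N → (0:ℝ) < 1 + 2 * (k:ℝ) * ε := by
    intro k hk
    simp only [Finset.mem_Icc] at hk
    have hkR : (k:ℝ) ≤ (N:ℝ) := by exact_mod_cast hk.2
    have hk0 : (0:ℝ) ≤ (k:ℝ) := Nat.cast_nonneg k
    have habs : |2 * (k:ℝ) * ε| < 1 := by
      rw [abs_mul, abs_of_nonneg (by positivity : (0:ℝ) ≤ 2 * (k:ℝ))]
      have h2N : (0:ℝ) < 2 * (N:ℝ) := by linarith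
      have hm1 : 2 * (k:ℝ) * |ε| ≤ 2 * (N:ℝ) * |ε| := by
        apply mul_le_mul_of_nonneg_right _ (abs_nonneg ε)
        linarith
      have h2 : 2 * (N:ℝ) * |ε| < 2 * (N:ℝ) * (1/(2*(N:ℝ))) :=
        mul_lt_mul_of_pos_left hε' h2N
      have h3 : 2 * (N:ℝ) * (1/(2*(N:ℝ))) = 1 := by field_simp
      linarith
    have := abs_lt.mp habs
    linarith [this.1]
  have hL2eval : Polynomial.eval ε (L2 N) = ∑ k ∈ Finset.Icc 1 N,
      16 * cc N k * ∏ j ∈ Finset.Icc 1 N \ {k}, (1 + 2*(j:ℝ)*ε) := by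
    rw [L2, Polynomial.eval_finset_sum]
    apply Finset.sum_congr rfl
    intro k hk
    rw [Polynomial.eval_mul, Polynomial.eval_C, Polynomial.eval_prod]
    congr 1
    apply Finset.prod_congr rfl
    intro j hj
    simp [mul_assoc]
  have hRpeval : Polynomial.eval ε (Rp N) = ε^2 * Polynomial.eval ε (L2 N) := by
    rw [← keyPoly N hN, Polynomial.eval_mul, Polynomial.eval_pow, Polynomial.eval_X]
  have hm : m ε 4 N = Polynomial.eval ε (Rp N) / (16 * ε^2) := by
    rw [m4_closed ε hε0 N]
    rw [show Polynomial.eval ε (Rp N) =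
      (3 + 6*ε)*(1 + 8*ε)^N - (6 + 8*ε)*(1 + 4*ε)^N + (3 + 2*ε) by
        simp only [Rp, Polynomial.eval_add, Polynomial.eval_sub, Polynomial.eval_mul,
          Polynomial.eval_pow, Polynomial.eval_one, Polynomial.eval_C, Polynomial.eval_X]]
  rw [hm, hRpeval, hL2eval, pref_eq ε N hN hε0, Finset.mul_sum, Finset.mul_sum, Finset.sum_div]
  apply Finset.sum_congr rfl
  intro k hk
  have h1p : (0:ℝ) < 1 + 2*(k:ℝ)*ε := hpos k hk
  have h1ne : (1 + 2*(k:ℝ)*ε) ≠ 0 := ne_of_gt h1p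
  have h2ne : (2 + 4*(k:ℝ)*ε) ≠ 0 := by intro h; apply h1ne; linarith
  have hQ : ∏ j ∈ Finset.Icc 1 N, (1 + 2*(j:ℝ)*ε) =
      (∏ j ∈ Finset.Icc 1 N \ {k}, (1 + 2*(j:ℝ)*ε)) * (1 + 2*(k:ℝ)*ε) :=
    Finset.prod_eq_prod_diff_singleton_mul hk _
  rw [hQ]
  simp only [cc, Sc]
  rw [show (2 + 4 * (k : ℝ) * ε) = 2 * (1 + 2 * (k : ℝ) * ε) by ring]
  generalize (1 + 2 * (k : ℝ) * ε) = u at h1ne ⊢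
  field_simp
  ring
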